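/- Let n ≥ 3 and s > (n-1)/2. For x, y ∈ S^{n-1} with x ≠ y, let K_{-s}(x·y) = (4/(n-2))^{s-1/2} (Γ(s+1/2)/Γ(2s)) ∫_0^∞ e^{-t(n-2)/2} (P_{e^{-t}}(x·y) − 1/ω_{n-1}) I_{s-1/2}((n-2)t/2) t^{s-1/2} dt. Then there exists a constant c depending only on n and s such that |K_{-s}(x·y)| ≤ c for all x, y ∈ S^{n-1} with x ≠ y. -/

import Mathlib

open MeasureTheory

/-- The surface area `ω_{n-1} = 2π^{n/2}/Γ(n/2)` of the unit sphere `S^{n-1} ⊂ ℝ^n`. -/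
noncomputable def omegaSphere (n : ℕ) : ℝ :=
  2 * Real.pi ^ ((n : ℝ) / 2) / Real.Gamma ((n : ℝ) / 2)

/-- The Poisson kernel for the unit ball in `ℝ^n`:
`P_r(τ) = (1 - r²)/(ω_{n-1}(1 - 2rτ + r²)^{n/2})`. -/
noncomputable def spherePoissonKernel (n : ℕ) (r τ : ℝ) : ℝ :=
  (1 - r ^ 2) / (omegaSphere n * (1 - 2 * r * τ + r ^ 2) ^ ((n : ℝ) / 2))

/-- The modified Bessel function of the first kind,
`I_ρ(z) = ∑_{m=0}^∞ (z/2)^(2m+ρ)/(Γ(m+1)Γ(m+ρ+1))`. -/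
noncomputable def besselI (ρ z : ℝ) : ℝ :=
  ∑' m : ℕ, (z / 2) ^ (2 * (m : ℝ) + ρ) /
    (Real.Gamma ((m : ℝ) + 1) * Real.Gamma ((m : ℝ) + ρ + 1))

open MeasureTheory

lemma omegaSphere_pos {n : ℕ} (hn : 0 < n) : 0 < omegaSphere n := by
  have h2 : 0 < (n : ℝ) / 2 := by positivity
  have := Real.Gamma_pos_of_pos h2
  have hpi : (0:ℝ) < Real.pi ^ ((n : ℝ) / 2) := Real.rpow_pos_of_pos Real.pi_pos _
  unfold omegaSphere; positivity

lemma factorial_mul_gamma_le {ρ : ℝ} (hρ : 0 ≤ ρ) (m : ℕ) :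
    (m.factorial : ℝ) * Real.Gamma (ρ + 1) ≤ Real.Gamma ((m : ℝ) + ρ + 1) := by
  induction m with
  | zero => simp
  | succ k ih =>
    have h1 : ((k : ℝ) + 1) + ρ + 1 = ((k : ℝ) + ρ + 1) + 1 := by ring
    have hpos : 0 < (k : ℝ) + ρ + 1 := by positivity
    have h2 : Real.Gamma (((k : ℝ) + ρ + 1) + 1) = ((k : ℝ) + ρ + 1) * Real.Gamma ((k : ℝ) + ρ + 1) :=
      Real.Gamma_add_one hpos.ne'
    have hgpos : 0 < Real.Gamma ((k : ℝ) + ρ + 1) := Real.Gamma_pos_of_pos hpos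
    have hk1 : ((k + 1).factorial : ℝ) = ((k : ℝ) + 1) * k.factorial := by
      push_cast [Nat.factorial_succ]; ring
    push_cast
    rw [h1, h2, hk1]
    calc ((k : ℝ) + 1) * k.factorial * Real.Gamma (ρ + 1)
        = ((k : ℝ) + 1) * ((k.factorial : ℝ) * Real.Gamma (ρ + 1)) := by ring
      _ ≤ ((k : ℝ) + 1) * Real.Gamma ((k : ℝ) + ρ + 1) := by
          apply mul_le_mul_of_nonneg_left ih (by positivity)
      _ ≤ ((k : ℝ) + ρ + 1) * Real.Gamma ((k : ℝ) + ρ + 1) := by nlinarith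

lemma besselI_nonneg {ρ z : ℝ} (hρ : 0 ≤ ρ) (hz : 0 < z) : 0 ≤ besselI ρ z := by
  apply tsum_nonneg
  intro m
  have h1 : 0 < (z / 2) ^ (2 * (m : ℝ) + ρ) := Real.rpow_pos_of_pos (by linarith) _
  have h2 : 0 < Real.Gamma ((m : ℝ) + 1) := Real.Gamma_pos_of_pos (by positivity)
  have h3 : 0 < Real.Gamma ((m : ℝ) + ρ + 1) := Real.Gamma_pos_of_pos (by positivity)
  positivity

lemma besselI_le {ρ z : ℝ} (hρ : 0 ≤ ρ) (hz : 0 < z) :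
    besselI ρ z ≤ (z / 2) ^ ρ * Real.exp z / Real.Gamma (ρ + 1) := by
  set w := z / 2 with hw
  have hwpos : 0 < w := by rw [hw]; linarith
  have hΓρ : 0 < Real.Gamma (ρ + 1) := Real.Gamma_pos_of_pos (by linarith)
  set c : ℕ → ℝ := fun m => w ^ m / m.factorial with hc
  have hcsum : Summable c := Real.summable_pow_div_factorial w
  have hctsum : ∑' m, c m = Real.exp w := by
    rw [Real.exp_eq_exp_ℝ, NormedSpace.exp_eq_tsum_div]
  have hcnn : ∀ m, 0 ≤ c m := fun m => by
    simp only [hc]; positivity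
  have hcle : ∀ m, c m ≤ Real.exp w := fun m => hctsum ▸ Summable.le_tsum hcsum m (fun j _ => hcnn j)
  set b : ℕ → ℝ := fun m => (w ^ ρ * Real.exp w / Real.Gamma (ρ + 1)) * c m with hb
  set a : ℕ → ℝ := fun m => (z / 2) ^ (2 * (m : ℝ) + ρ) /
    (Real.Gamma ((m : ℝ) + 1) * Real.Gamma ((m : ℝ) + ρ + 1)) with ha
  have hab : ∀ m, a m ≤ b m := by
    intro m
    have h1 : (z / 2) ^ (2 * (m : ℝ) + ρ) = (w ^ m) ^ 2 * w ^ ρ := by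
      rw [← hw, ← Real.rpow_natCast w m, ← Real.rpow_natCast (w ^ (m:ℝ)) 2,
        ← Real.rpow_mul hwpos.le, ← Real.rpow_add hwpos]
      push_cast; ring_nf
    have h2 : Real.Gamma ((m : ℝ) + 1) = m.factorial := Real.Gamma_nat_eq_factorial m
    have h3 : (m.factorial : ℝ) * Real.Gamma (ρ + 1) ≤ Real.Gamma ((m : ℝ) + ρ + 1) :=
      factorial_mul_gamma_le hρ m
    have hfpos : (0:ℝ) < m.factorial := by positivity
    have hΓmρ : 0 < Real.Gamma ((m : ℝ) + ρ + 1) := Real.Gamma_pos_of_pos (by positivity)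
    simp only [ha, hb, hc]
    rw [h1, h2]
    have step1 : (w ^ m) ^ 2 * w ^ ρ / ((m.factorial : ℝ) * Real.Gamma ((m:ℝ) + ρ + 1))
        ≤ (w ^ m) ^ 2 * w ^ ρ / ((m.factorial : ℝ) * ((m.factorial : ℝ) * Real.Gamma (ρ + 1))) := by
      apply div_le_div_of_nonneg_left (by positivity) (by positivity)
      exact mul_le_mul_of_nonneg_left h3 hfpos.le
    refine step1.trans ?_
    have hwρ : 0 < w ^ ρ := Real.rpow_pos_of_pos hwpos _
    have : (w ^ m) ^ 2 * w ^ ρ / ((m.factorial : ℝ) * ((m.factorial : ℝ) * Real.Gamma (ρ + 1)))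
        = (w ^ ρ / Real.Gamma (ρ + 1)) * ((w ^ m / m.factorial) * (w ^ m / m.factorial)) := by
      field_simp
    rw [this]
    have heq2 : (w ^ ρ * Real.exp w / Real.Gamma (ρ + 1)) * (w ^ m / m.factorial)
        = (w ^ ρ / Real.Gamma (ρ + 1)) * ((w ^ m / m.factorial) * Real.exp w) := by ring
    rw [heq2]
    apply mul_le_mul_of_nonneg_left _ (by positivity)
    exact mul_le_mul_of_nonneg_left (hcle m) (hcnn m)
  have hbsum : Summable b := hcsum.mul_left _
  have hasum : Summable a := by
    apply Summable.of_nonneg_of_le _ hab hbsum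
    intro m
    have h1 : 0 < (z / 2) ^ (2 * (m : ℝ) + ρ) := Real.rpow_pos_of_pos (by linarith) _
    have h2 : 0 < Real.Gamma ((m : ℝ) + 1) := Real.Gamma_pos_of_pos (by positivity)
    have h3 : 0 < Real.Gamma ((m : ℝ) + ρ + 1) := Real.Gamma_pos_of_pos (by positivity)
    simp only [ha]; positivity
  calc besselI ρ z = ∑' m, a m := rfl
    _ ≤ ∑' m, b m := Summable.tsum_le_tsum hab hasum hbsum
    _ = (w ^ ρ * Real.exp w / Real.Gamma (ρ + 1)) * ∑' m, c m := tsum_mul_left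
    _ = w ^ ρ * (Real.exp w * Real.exp w) / Real.Gamma (ρ + 1) := by rw [hctsum]; ring
    _ = (z / 2) ^ ρ * Real.exp z / Real.Gamma (ρ + 1) := by
        rw [← Real.exp_add]
        have hww : w + w = z := by rw [hw]; ring
        rw [hww, ← hw]


lemma pow_one_add_le {r : ℝ} (h0 : 0 ≤ r) (h1 : r ≤ 1) (k : ℕ) :
    (1 + r) ^ k ≤ 1 + ((2:ℝ) ^ k - 1) * r := by
  induction k with
  | zero => norm_num
  | succ k ih =>
    have h2 : (0:ℝ) ≤ (2:ℝ) ^ k - 1 := by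
      have : (1:ℝ) ≤ 2 ^ k := one_le_pow₀ (by norm_num)
      linarith
    calc (1 + r) ^ (k + 1) = (1 + r) ^ k * (1 + r) := by ring
      _ ≤ (1 + ((2:ℝ) ^ k - 1) * r) * (1 + r) := by
          apply mul_le_mul_of_nonneg_right ih (by linarith)
      _ ≤ 1 + ((2:ℝ) ^ (k+1) - 1) * r := by
          have hr2 : r * r ≤ r := by nlinarith
          have he : (1 + ((2:ℝ) ^ k - 1) * r) * (1 + r)
              = 1 + (2:ℝ) ^ k * r + ((2:ℝ) ^ k - 1) * (r * r) := by ring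
          rw [he]
          have h3 : ((2:ℝ) ^ k - 1) * (r * r) ≤ ((2:ℝ) ^ k - 1) * r :=
            mul_le_mul_of_nonneg_left hr2 h2
          have h4 : ((2:ℝ) ^ (k+1) - 1) * r = (2:ℝ)^k * r + ((2:ℝ)^k - 1) * r := by ring
          linarith

set_option maxHeartbeats 2000000 in
lemma poisson_bound {n : ℕ} (hn : 3 ≤ n) {r τ : ℝ} (hr0 : 0 < r) (hr1 : r < 1)
    (hτ : |τ| ≤ 1) :
    |spherePoissonKernel n r τ - 1 / omegaSphere n| ≤
      ((2:ℝ) ^ n + n) * r / (omegaSphere n * (1 - r) ^ (n - 1)) := by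
  have hω : 0 < omegaSphere n := omegaSphere_pos (by omega)
  set ω := omegaSphere n with hωdef
  set C : ℝ := (2:ℝ) ^ n + n with hC
  set A : ℝ := (1 - r) ^ (n - 1) with hA
  set B : ℝ := (1 + r) ^ (n - 1) with hB
  have hr1' : 0 < 1 - r := by linarith
  have hApos : 0 < A := pow_pos hr1' _
  have hBpos : 0 < B := pow_pos (by linarith) _
  have hA1 : A ≤ 1 := pow_le_one₀ (by linarith) (by linarith)
  have hB1 : 1 ≤ B := one_le_pow₀ (by linarith)
  have hτ1 : τ ≤ 1 := (abs_le.mp hτ).2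
  have hτ2 : -1 ≤ τ := (abs_le.mp hτ).1
  set Q : ℝ := 1 - 2 * r * τ + r ^ 2 with hQ
  have hQl : (1 - r) ^ 2 ≤ Q := by rw [hQ]; nlinarith
  have hQu : Q ≤ (1 + r) ^ 2 := by rw [hQ]; nlinarith
  have hQpos : 0 < Q := lt_of_lt_of_le (by positivity) hQl
  set Qp : ℝ := Q ^ ((n : ℝ) / 2) with hQp
  have sq_rpow : ∀ a : ℝ, 0 ≤ a → (a ^ 2) ^ ((n : ℝ) / 2) = a ^ n := by
    intro a ha
    rw [← Real.rpow_natCast a 2, ← Real.rpow_mul ha]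
    have h2 : ((2:ℕ):ℝ) * ((n:ℝ)/2) = ((n:ℕ):ℝ) := by push_cast; ring
    rw [h2, Real.rpow_natCast]
  have hQpl : (1 - r) ^ n ≤ Qp := by
    rw [← sq_rpow (1 - r) hr1'.le, hQp]
    exact Real.rpow_le_rpow (by positivity) hQl (by positivity)
  have hQpu : Qp ≤ (1 + r) ^ n := by
    rw [← sq_rpow (1 + r) (by linarith), hQp]
    exact Real.rpow_le_rpow hQpos.le hQu (by positivity)
  have hQppos : 0 < Qp := lt_of_lt_of_le (pow_pos hr1' n) hQpl
  have hsplitA : (1 - r) ^ n = (1 - r) * A := by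
    rw [hA, ← pow_succ']
    congr 1
    omega
  have hsplitB : (1 + r) ^ n = (1 + r) * B := by
    rw [hB, ← pow_succ']
    congr 1
    omega
  have hP : spherePoissonKernel n r τ = (1 - r ^ 2) / (ω * Qp) := rfl
  set P := spherePoissonKernel n r τ with hPdef
  have hnum : 0 ≤ 1 - r ^ 2 := by nlinarith
  have hPup : P ≤ (1 - r ^ 2) / (ω * ((1 - r) * A)) := by
    rw [hP]
    apply div_le_div_of_nonneg_left hnum (by positivity)
    rw [← hsplitA]
    exact mul_le_mul_of_nonneg_left hQpl hω.le
  have hPlo : (1 - r ^ 2) / (ω * ((1 + r) * B)) ≤ P := by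
    rw [hP]
    apply div_le_div_of_nonneg_left hnum (by positivity)
    rw [← hsplitB]
    exact mul_le_mul_of_nonneg_left hQpu hω.le
  -- Bernoulli : 1 - (n-1) r ≤ A
  have hbern : 1 - ((n : ℝ) - 1) * r ≤ A := by
    have := one_add_mul_le_pow (a := -r) (by linarith) (n - 1)
    have hcast : ((n - 1 : ℕ) : ℝ) = (n : ℝ) - 1 := by
      have : 1 ≤ n := by omega
      push_cast [Nat.cast_sub this]
      ring
    rw [hA]
    calc 1 - ((n:ℝ) - 1) * r = 1 + ((n - 1 : ℕ) : ℝ) * (-r) := by rw [hcast]; ring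
      _ ≤ (1 + -r) ^ (n - 1) := this
      _ = (1 - r) ^ (n - 1) := by ring_nf
  have h2n : (1:ℝ) ≤ 2 ^ n := one_le_pow₀ (by norm_num)
  have hBle : B ≤ 1 + ((2:ℝ) ^ (n-1) - 1) * r := pow_one_add_le hr0.le hr1.le _
  have h2half : (2:ℝ) ^ (n-1) ≤ 2 ^ n := pow_le_pow_right₀ (by norm_num) (by omega)
  rw [hP] at hPdef
  clear_value ω C A B Q Qp P
  rw [abs_le]
  constructor
  · -- lower:  -(Cr/(ωA)) ≤ P - 1/ω  i.e.  1/ω - P ≤ Cr/(ωA)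
    have step1 : 1 / ω - P ≤ 1 / ω - (1 - r ^ 2) / (ω * ((1 + r) * B)) := by linarith
    have step2 : 1 / ω - (1 - r ^ 2) / (ω * ((1 + r) * B))
        = ((1 + r) * B - (1 - r ^ 2)) / (ω * ((1 + r) * B)) := by
      field_simp
    have hnum2 : (1 + r) * B - (1 - r ^ 2) ≤ (1 + r) * ((2:ℝ) ^ (n-1) * r) := by nlinarith
    have step3 : ((1 + r) * B - (1 - r ^ 2)) / (ω * ((1 + r) * B))
        ≤ ((1 + r) * ((2:ℝ) ^ (n-1) * r)) / (ω * ((1 + r) * B)) := by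
      gcongr
    have step4 : ((1 + r) * ((2:ℝ) ^ (n-1) * r)) / (ω * ((1 + r) * B))
        = ((2:ℝ) ^ (n-1) * r) / (ω * B) := by
      field_simp
    have step5 : ((2:ℝ) ^ (n-1) * r) / (ω * B) ≤ ((2:ℝ) ^ (n-1) * r) / ω :=
      div_le_div_of_nonneg_left (by positivity) hω (le_mul_of_one_le_right hω.le hB1)
    have hCge : (2:ℝ) ^ (n-1) ≤ C := by
      rw [hC]
      have hn0 : (0:ℝ) ≤ n := by positivity
      linarith
    have hCpos : 0 < C := by
      rw [hC]; positivity
    have step6 : ((2:ℝ) ^ (n-1) * r) / ω ≤ C * r / (ω * A) :=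
      div_le_div₀ (mul_nonneg hCpos.le hr0.le) (mul_le_mul_of_nonneg_right hCge hr0.le)
        (mul_pos hω hApos) (mul_le_of_le_one_right hω.le hA1)
    linarith
  · -- upper : P - 1/ω ≤ C r/(ωA)
    have step2 : (1 - r ^ 2) / (ω * ((1 - r) * A)) ≤ 1 / ω + C * r / (ω * A) := by
      rw [div_add_div _ _ (ne_of_gt hω) (by positivity), div_le_div_iff₀ (by positivity) (by positivity)]
      have key : 1 + r ≤ A + C * r := by
        rw [hC]
        have : (0:ℝ) ≤ 2^n - 1 := by linarith
        nlinarith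
      calc (1 - r ^ 2) * (ω * (ω * A)) = (ω * ((1-r) * A)) * (ω * (1 + r)) := by ring
        _ ≤ (ω * ((1-r) * A)) * (ω * (A + C * r)) := by
            apply mul_le_mul_of_nonneg_left _ (by positivity)
            exact mul_le_mul_of_nonneg_left key hω.le
        _ = (1 * (ω * A) + ω * (C * r)) * (ω * ((1 - r) * A)) := by ring
    linarith


lemma one_add_pow_le {t : ℝ} (ht : 0 ≤ t) (k : ℕ) :
    (1 + t) ^ k ≤ 2 ^ k * (1 + t ^ k) := by
  have htk : 0 ≤ t ^ k := pow_nonneg ht k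
  rcases le_total t 1 with h | h
  · calc (1 + t) ^ k ≤ 2 ^ k := pow_le_pow_left₀ (by linarith) (by linarith) k
      _ ≤ 2 ^ k * (1 + t ^ k) := le_mul_of_one_le_right (by positivity) (by linarith)
  · calc (1 + t) ^ k ≤ (2 * t) ^ k := pow_le_pow_left₀ (by linarith) (by linarith) k
      _ = 2 ^ k * t ^ k := mul_pow 2 t k
      _ ≤ 2 ^ k * (1 + t ^ k) := by
          apply mul_le_mul_of_nonneg_left (by linarith) (by positivity)

noncomputable def boundConst (n : ℕ) (s : ℝ) : ℝ :=
  ((2:ℝ) ^ n + n) * (((n:ℝ) - 2) / 4) ^ (s - 1/2) /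
    (omegaSphere n * Real.Gamma (s - 1/2 + 1)) * 2 ^ (n - 1)

set_option maxHeartbeats 2000000 in
lemma pointwise_bound (n : ℕ) (hn : 3 ≤ n) (s τ : ℝ) (hs : ((n : ℝ) - 1) / 2 < s)
    (hτ : |τ| ≤ 1) {t : ℝ} (ht : 0 < t) :
    |Real.exp (-(t * ((n : ℝ) - 2) / 2)) *
        (spherePoissonKernel n (Real.exp (-t)) τ - 1 / omegaSphere n) *
        besselI (s - 1/2) (((n : ℝ) - 2) * t / 2) * t ^ (s - 1/2)| ≤
      boundConst n s * (Real.exp (-t) * t ^ (2*s - n) + Real.exp (-t) * t ^ (2*s - 1)) := by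
  have hn3 : (3:ℝ) ≤ (n:ℝ) := by exact_mod_cast hn
  have hν : 0 < (n:ℝ) - 2 := by linarith
  have hρ : 0 < s - 1/2 := by nlinarith
  have hω : 0 < omegaSphere n := omegaSphere_pos (by omega)
  have hΓ : 0 < Real.Gamma (s - 1/2 + 1) := Real.Gamma_pos_of_pos (by linarith)
  have hr0 : 0 < Real.exp (-t) := Real.exp_pos _
  have hr1 : Real.exp (-t) < 1 := by
    rw [Real.exp_lt_one_iff]; linarith
  have hz : 0 < ((n:ℝ) - 2) * t / 2 := by positivity
  have hI0 : 0 ≤ besselI (s - 1/2) (((n:ℝ) - 2) * t / 2) := besselI_nonneg hρ.le hz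
  have htρ : (0:ℝ) ≤ t ^ (s - 1/2) := Real.rpow_nonneg ht.le _
  set r := Real.exp (-t) with hrdef
  set ω := omegaSphere n with hωdef
  set CP : ℝ := (2:ℝ) ^ n + n with hCP
  have hCPpos : 0 < CP := by rw [hCP]; positivity
  set A : ℝ := (1 - r) ^ (n - 1) with hAdef
  have hApos : 0 < A := pow_pos (by linarith) _
  set I : ℝ := besselI (s - 1/2) (((n:ℝ) - 2) * t / 2) with hIdef
  set ΔP : ℝ := spherePoissonKernel n r τ - 1 / ω with hΔPdef
  have habs : |Real.exp (-(t * ((n:ℝ) - 2) / 2)) * ΔP * I * t ^ (s - 1/2)|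
      = Real.exp (-(t * ((n:ℝ) - 2) / 2)) * |ΔP| * I * t ^ (s - 1/2) := by
    rw [abs_mul, abs_mul, abs_mul, abs_of_pos (Real.exp_pos _), abs_of_nonneg hI0,
      abs_of_nonneg htρ]
  rw [habs]
  have hb1 : |ΔP| ≤ CP * r / (ω * A) := poisson_bound hn hr0 hr1 hτ
  have hb1nn : (0:ℝ) ≤ CP * r / (ω * A) := by
    apply div_nonneg (by positivity)
    exact mul_nonneg hω.le hApos.le
  -- Bessel bound with (z/2)^ρ rewritten
  have hb2 : I ≤ (((n:ℝ) - 2) / 4) ^ (s - 1/2) * t ^ (s - 1/2) *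
      Real.exp (((n:ℝ) - 2) * t / 2) / Real.Gamma (s - 1/2 + 1) := by
    have h := besselI_le hρ.le hz
    have h2 : ((((n:ℝ) - 2) * t / 2) / 2) = (((n:ℝ) - 2) / 4) * t := by ring
    rw [h2, Real.mul_rpow (by positivity) ht.le] at h
    exact h
  have hb2nn : (0:ℝ) ≤ (((n:ℝ) - 2) / 4) ^ (s - 1/2) * t ^ (s - 1/2) *
      Real.exp (((n:ℝ) - 2) * t / 2) / Real.Gamma (s - 1/2 + 1) := by positivity
  -- chain of multiplications
  have step1 : Real.exp (-(t * ((n:ℝ) - 2) / 2)) * |ΔP| * I * t ^ (s - 1/2)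
      ≤ Real.exp (-(t * ((n:ℝ) - 2) / 2)) * (CP * r / (ω * A)) *
        ((((n:ℝ) - 2) / 4) ^ (s - 1/2) * t ^ (s - 1/2) *
          Real.exp (((n:ℝ) - 2) * t / 2) / Real.Gamma (s - 1/2 + 1)) * t ^ (s - 1/2) := by
    apply mul_le_mul_of_nonneg_right _ htρ
    apply mul_le_mul _ hb2 hI0 _
    · exact mul_le_mul_of_nonneg_left hb1 (Real.exp_pos _).le
    · exact mul_nonneg (Real.exp_pos _).le hb1nn
  set K : ℝ := CP * (((n:ℝ) - 2) / 4) ^ (s - 1/2) / (ω * Real.Gamma (s - 1/2 + 1)) with hK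
  have hKpos : 0 < K := by
    rw [hK]
    have h4 : (0:ℝ) < (((n:ℝ) - 2) / 4) ^ (s - 1/2) := Real.rpow_pos_of_pos (by linarith) _
    positivity
  have hexp1 : Real.exp (-(t * ((n:ℝ) - 2) / 2)) * Real.exp (((n:ℝ) - 2) * t / 2) = 1 := by
    rw [← Real.exp_add, show -(t * ((n:ℝ) - 2) / 2) + ((n:ℝ) - 2) * t / 2 = 0 by ring,
      Real.exp_zero]
  have hrw1 : Real.exp (-(t * ((n:ℝ) - 2) / 2)) * (CP * r / (ω * A)) *
        ((((n:ℝ) - 2) / 4) ^ (s - 1/2) * t ^ (s - 1/2) *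
          Real.exp (((n:ℝ) - 2) * t / 2) / Real.Gamma (s - 1/2 + 1)) * t ^ (s - 1/2)
      = K * (r * A⁻¹) * t ^ (2*s - 1) := by
    have htt : t ^ (s - 1/2) * t ^ (s - 1/2) = t ^ (2*s - 1) := by
      rw [← Real.rpow_add ht]
      congr 1
      ring
    have gen : ∀ (E E' tρ Dρ Γv rv Av ωv CPv : ℝ), Γv ≠ 0 → Av ≠ 0 → ωv ≠ 0 → E * E' = 1 →
        E * (CPv * rv / (ωv * Av)) * (Dρ * tρ * E' / Γv) * tρ
          = (CPv * Dρ / (ωv * Γv)) * (rv * Av⁻¹) * (tρ * tρ) := by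
      intro E E' tρ Dρ Γv rv Av ωv CPv h1 h2 h3 h4
      have h5 : E * (CPv * rv / (ωv * Av)) * (Dρ * tρ * E' / Γv) * tρ
          = (CPv * Dρ / (ωv * Γv)) * (rv * Av⁻¹) * (tρ * tρ) * (E * E') := by
        field_simp
      rw [h5, h4, mul_one]
    rw [gen _ _ _ _ _ _ _ _ _ hΓ.ne' hApos.ne' hω.ne' hexp1, htt, hK]
  -- second bound : r * A⁻¹ ≤ exp (-t) * ((1+t)^(n-1)/t^(n-1))
  have h1t : (0:ℝ) < 1 + t := by linarith
  have hb3 : r * A⁻¹ ≤ r * ((1 + t) ^ (n-1) / t ^ (n-1)) := by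
    apply mul_le_mul_of_nonneg_left _ hr0.le
    have h1r : t / (1 + t) ≤ 1 - r := by
      have he : t + 1 ≤ Real.exp t := Real.add_one_le_exp t
      have hrle : r ≤ (1 + t)⁻¹ := by
        rw [hrdef, Real.exp_neg]
        exact inv_anti₀ h1t (by linarith)
      have hid : 1 - (1 + t)⁻¹ = t / (1 + t) := by field_simp; ring
      linarith
    have hpow : (t / (1 + t)) ^ (n-1) ≤ A := by
      rw [hAdef]
      exact pow_le_pow_left₀ (by positivity) h1r _
    have hApos2 : (0:ℝ) < (t / (1 + t)) ^ (n-1) := pow_pos (by positivity) _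
    calc A⁻¹ ≤ ((t / (1 + t)) ^ (n-1))⁻¹ := inv_anti₀ hApos2 hpow
      _ = (1 + t) ^ (n-1) / t ^ (n-1) := by
          rw [div_pow, inv_div]
  have ht2s1 : (0:ℝ) ≤ t ^ (2*s - 1) := Real.rpow_nonneg ht.le _
  have step2 : K * (r * A⁻¹) * t ^ (2*s - 1)
      ≤ K * (r * ((1 + t) ^ (n-1) / t ^ (n-1))) * t ^ (2*s - 1) := by
    apply mul_le_mul_of_nonneg_right _ ht2s1
    exact mul_le_mul_of_nonneg_left hb3 hKpos.le
  have step3 : K * (r * ((1 + t) ^ (n-1) / t ^ (n-1))) * t ^ (2*s - 1)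
      ≤ K * (r * ((2 ^ (n-1) * (1 + t ^ (n-1))) / t ^ (n-1))) * t ^ (2*s - 1) := by
    apply mul_le_mul_of_nonneg_right _ ht2s1
    apply mul_le_mul_of_nonneg_left _ hKpos.le
    apply mul_le_mul_of_nonneg_left _ hr0.le
    exact (div_le_div_iff_of_pos_right (pow_pos ht _)).mpr (one_add_pow_le ht.le _)
  have hsplit : t ^ (2*s - 1) = t ^ (n-1) * t ^ (2*s - (n:ℝ)) := by
    rw [← Real.rpow_natCast t (n-1), ← Real.rpow_add ht]
    congr 1
    have : ((n - 1 : ℕ) : ℝ) = (n:ℝ) - 1 := by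
      have h1n : 1 ≤ n := by omega
      push_cast [Nat.cast_sub h1n]
      ring
    rw [this]
    ring
  have hfinal : K * (r * ((2 ^ (n-1) * (1 + t ^ (n-1))) / t ^ (n-1))) * t ^ (2*s - 1)
      = boundConst n s * (r * t ^ (2*s - (n:ℝ)) + r * t ^ (2*s - 1)) := by
    have hbc : boundConst n s = K * 2 ^ (n-1) := by
      simp only [boundConst, hK, hCP, hωdef]
    rw [hbc]
    rw [hsplit]
    have htn : (t:ℝ) ^ (n-1) ≠ 0 := (pow_pos ht _).ne'
    field_simp
  calc Real.exp (-(t * ((n:ℝ) - 2) / 2)) * |ΔP| * I * t ^ (s - 1/2)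
      ≤ K * (r * A⁻¹) * t ^ (2*s - 1) := by rw [← hrw1]; exact step1
    _ ≤ K * (r * ((1 + t) ^ (n-1) / t ^ (n-1))) * t ^ (2*s - 1) := step2
    _ ≤ K * (r * ((2 ^ (n-1) * (1 + t ^ (n-1))) / t ^ (n-1))) * t ^ (2*s - 1) := step3
    _ = boundConst n s * (r * t ^ (2*s - (n:ℝ)) + r * t ^ (2*s - 1)) := hfinal


theorem stmt12 (n : ℕ) (hn : 3 ≤ n) (s : ℝ) (hs : ((n : ℝ) - 1) / 2 < s) :
    ∃ c : ℝ, ∀ x y : EuclideanSpace ℝ (Fin n),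
      x ∈ Metric.sphere (0 : EuclideanSpace ℝ (Fin n)) 1 →
      y ∈ Metric.sphere (0 : EuclideanSpace ℝ (Fin n)) 1 → x ≠ y →
      |(4 / ((n : ℝ) - 2)) ^ (s - 1/2) * (Real.Gamma (s + 1/2) / Real.Gamma (2 * s)) *
          ∫ t in Set.Ioi (0 : ℝ),
            Real.exp (-(t * ((n : ℝ) - 2) / 2)) *
              (spherePoissonKernel n (Real.exp (-t)) (inner ℝ x y : ℝ) - 1 / omegaSphere n) *
              besselI (s - 1/2) (((n : ℝ) - 2) * t / 2) * t ^ (s - 1/2)| ≤ c := by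
  have hn3 : (3:ℝ) ≤ (n:ℝ) := by exact_mod_cast hn
  -- the dominating function
  set g : ℝ → ℝ := fun t =>
    boundConst n s * (Real.exp (-t) * t ^ (2*s - (n:ℝ)) + Real.exp (-t) * t ^ (2*s - 1))
    with hg
  have hgint : IntegrableOn g (Set.Ioi (0:ℝ)) := by
    have h1 : IntegrableOn (fun t => Real.exp (-t) * t ^ (2*s - (n:ℝ))) (Set.Ioi (0:ℝ)) := by
      have h := Real.GammaIntegral_convergent (s := 2*s - (n:ℝ) + 1) (by nlinarith)
      simpa only [show 2*s - (n:ℝ) + 1 - 1 = 2*s - (n:ℝ) from by ring] using h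
    have h2 : IntegrableOn (fun t => Real.exp (-t) * t ^ (2*s - 1)) (Set.Ioi (0:ℝ)) := by
      have h := Real.GammaIntegral_convergent (s := 2*s) (by nlinarith)
      simpa only [show 2*s - 1 = 2*s - 1 from rfl] using h
    exact (h1.add h2).const_mul _
  refine ⟨|(4 / ((n : ℝ) - 2)) ^ (s - 1/2) * (Real.Gamma (s + 1/2) / Real.Gamma (2 * s))| *
    ∫ t in Set.Ioi (0:ℝ), g t, ?_⟩
  intro x y hx hy hxy
  have hnx : ‖x‖ = 1 := by simpa using mem_sphere_zero_iff_norm.mp hx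
  have hny : ‖y‖ = 1 := by simpa using mem_sphere_zero_iff_norm.mp hy
  have hτ : |(inner ℝ x y : ℝ)| ≤ 1 := by
    have := abs_real_inner_le_norm x y
    rw [hnx, hny] at this
    simpa using this
  rw [abs_mul]
  apply mul_le_mul_of_nonneg_left _ (abs_nonneg _)
  have key : ‖∫ t in Set.Ioi (0:ℝ),
      Real.exp (-(t * ((n : ℝ) - 2) / 2)) *
        (spherePoissonKernel n (Real.exp (-t)) (inner ℝ x y : ℝ) - 1 / omegaSphere n) *
        besselI (s - 1/2) (((n : ℝ) - 2) * t / 2) * t ^ (s - 1/2)‖ ≤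
      ∫ t in Set.Ioi (0:ℝ), g t := by
    apply norm_integral_le_of_norm_le hgint
    rw [ae_restrict_iff' measurableSet_Ioi]
    apply ae_of_all
    intro t ht
    rw [Real.norm_eq_abs]
    exact pointwise_bound n hn s _ hs hτ ht
  simpa [Real.norm_eq_abs] using key
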